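/- Let f : ℝ → ℝ be a continuously differentiable probability density function supported in (0,∞) with ∫_0^∞ (1/x) f(x) dx < ∞, let F(q) = ∫_0^q f(x) dx, and for r, s > 0 define a(q) = F(q) + q · ∫_q^∞ (1/x) f(x) dx − r q / s. Then a is twice differentiable on (0,∞) and for every q > 0 the second derivative satisfies a″(q) = −f(q)/q ≤ 0. -/

import Mathlib

open MeasureTheory Set

lemma tail_hasDerivAt (g : ℝ → ℝ) (hint : IntegrableOn g (Ioi 0))
    (hq : (0:ℝ) < q) (hcont : ContinuousAt g q) :
    HasDerivAt (fun t => ∫ x in Ioi t, g x) (-g q) q := by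
  set c := q / 2 with hc
  have hc0 : 0 < c := by positivity
  have hcq : c < q := by simpa [hc] using half_lt_self hq
  have key : ∀ t ∈ Ioi c, (∫ x in Ioi t, g x)
      = (∫ x in Ioi c, g x) - ∫ x in c..t, g x := by
    intro t ht
    have hct : c ≤ t := le_of_lt ht
    have hunion : Ioc c t ∪ Ioi t = Ioi c := Ioc_union_Ioi_eq_Ioi hct
    have hdisj : Disjoint (Ioc c t) (Ioi t) := Ioc_disjoint_Ioi le_rfl
    have h1 : IntegrableOn g (Ioc c t) := hint.mono_set (fun x hx => lt_of_lt_of_le hc0 hx.1.le)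
    have h2 : IntegrableOn g (Ioi t) := hint.mono_set (Ioi_subset_Ioi (hc0.trans ht).le)
    have := setIntegral_union hdisj measurableSet_Ioi h1 h2
    rw [hunion] at this
    rw [intervalIntegral.integral_of_le hct]
    linarith [this]
  have hmeas : StronglyMeasurableAtFilter g (nhds q) :=
    ⟨Ioi 0, Ioi_mem_nhds hq, hint.aestronglyMeasurable⟩
  have hii : IntervalIntegrable g volume c q := by
    apply (hint.mono_set ?_).intervalIntegrable
    rw [uIcc_of_le hcq.le]
    exact fun x hx => lt_of_lt_of_le hc0 hx.1
  have hd : HasDerivAt (fun t => (∫ x in Ioi c, g x) - ∫ x in c..t, g x) (-g q) q :=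
    (intervalIntegral.integral_hasDerivAt_right hii hmeas hcont).const_sub _
  apply hd.congr_of_eventuallyEq
  filter_upwards [Ioi_mem_nhds hcq] with t ht using key t ht

/-- For a continuously differentiable density `f` supported in `(0,∞)`, the allocation
function `a(q) = F(q) + q ∫_q^∞ (1/x) f(x) dx − r q / s` is twice differentiable on
`(0,∞)` and its second derivative satisfies `a″(q) = −f(q)/q ≤ 0`. -/
theorem allocation_second_deriv
    (f : ℝ → ℝ) (hf_smooth : ContDiff ℝ 1 f) (hf_nonneg : ∀ x, 0 ≤ f x)
    (hf_supp : ∀ x ≤ 0, f x = 0)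
    (hf_int : ∫ x, f x = 1)
    (hmoment : IntegrableOn (fun x => (1 / x) * f x) (Ioi 0))
    (r s : ℝ) (hr : 0 < r) (hs : 0 < s) :
    ∀ q > 0,
      DifferentiableAt ℝ
        (fun q : ℝ =>
          (∫ x in (0:ℝ)..q, f x) + q * (∫ x in Ioi q, (1 / x) * f x) - r * q / s) q ∧
      HasDerivAt
        (deriv (fun q : ℝ =>
          (∫ x in (0:ℝ)..q, f x) + q * (∫ x in Ioi q, (1 / x) * f x) - r * q / s))
        (-(f q / q)) q ∧
      -(f q / q) ≤ 0 := by
  have hfc : Continuous f := hf_smooth.continuous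
  have hf_integrable : Integrable f := by
    by_contra h
    rw [integral_undef h] at hf_int
    norm_num at hf_int
  set g : ℝ → ℝ := fun x => (1 / x) * f x with hg
  have hgcont : ∀ t : ℝ, 0 < t → ContinuousAt g t := fun t ht =>
    ((continuousAt_const.div continuousAt_id ht.ne').mul hfc.continuousAt)
  -- derivative of the whole function at every positive point
  have hA : ∀ t : ℝ, 0 < t →
      HasDerivAt (fun q : ℝ =>
        (∫ x in (0:ℝ)..q, f x) + q * (∫ x in Ioi q, g x) - r * q / s)
        ((∫ x in Ioi t, g x) - r / s) t := by
    intro t ht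
    have hF : HasDerivAt (fun q : ℝ => ∫ x in (0:ℝ)..q, f x) (f t) t :=
      intervalIntegral.integral_hasDerivAt_right hf_integrable.intervalIntegrable
        (hfc.stronglyMeasurableAtFilter _ _) hfc.continuousAt
    have hG : HasDerivAt (fun q : ℝ => ∫ x in Ioi q, g x) (-g t) t :=
      tail_hasDerivAt g hmoment ht (hgcont t ht)
    have hqG : HasDerivAt (fun q : ℝ => q * ∫ x in Ioi q, g x)
        (1 * (∫ x in Ioi t, g x) + t * (-g t)) t :=
      (hasDerivAt_id t).mul hG
    have hlin : HasDerivAt (fun q : ℝ => r * q / s) (r / s) t := by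
      have : HasDerivAt (fun q : ℝ => r / s * q) (r / s) t := by
        simpa using (hasDerivAt_id t).const_mul (r / s)
      apply this.congr_of_eventuallyEq
      filter_upwards with x
      ring
    have := (hF.add hqG).sub hlin
    refine this.congr_deriv ?_
    have : t * g t = f t := by
      rw [hg]
      field_simp
    rw [mul_neg, this]
    ring
  intro q hq
  refine ⟨(hA q hq).differentiableAt, ?_, ?_⟩
  · have heq : deriv (fun q : ℝ =>
        (∫ x in (0:ℝ)..q, f x) + q * (∫ x in Ioi q, g x) - r * q / s)
        =ᶠ[nhds q] fun t => (∫ x in Ioi t, g x) - r / s := by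
      filter_upwards [Ioi_mem_nhds hq] with t ht
      exact (hA t ht).deriv
    have h2 : HasDerivAt (fun t : ℝ => (∫ x in Ioi t, g x) - r / s) (-(f q / q)) q := by
      have := (tail_hasDerivAt g hmoment hq (hgcont q hq)).sub_const (r / s)
      refine this.congr_deriv ?_
      rw [hg]
      field_simp
    exact h2.congr_of_eventuallyEq heq
  · have : 0 ≤ f q / q := div_nonneg (hf_nonneg q) hq.le
    linarith
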